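/- Every tensor **A** ∈ ℝ^{Nn×Nn}_s satisfying the structural hypothesis (SH) is rank-one positive; more precisely, for all η ∈ ℝ^N and a ∈ ℝⁿ one has **A**:η⊗a⊗η⊗a ≥ ( λ₁(B¹+⋯+B^N) · min_{γ=1,…,N} λ₁(A^γ) ) |η|²|a|², and the constant in brackets is strictly positive. -/

import Mathlib

open MeasureTheory Filter Topology
open scoped BigOperators

noncomputable section

/-- `Euc n` is the Euclidean space `ℝⁿ`. -/
abbrev Euc (n : ℕ) : Type := EuclideanSpace ℝ (Fin n)

/-- Squared Euclidean norm of a finite vector. -/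
def vsq {m : ℕ} (v : Fin m → ℝ) : ℝ := ∑ i, (v i) ^ 2

/-- Squared Euclidean norm of a third order tensor `X ∈ ℝ^{N×n×n}`. -/
def tsq {N n : ℕ} (X : Fin N → Fin n → Fin n → ℝ) : ℝ :=
  ∑ α, ∑ i, ∑ j, (X α i j) ^ 2

/-- First partial derivative `D_i f`. -/
def pder {n : ℕ} (f : Euc n → ℝ) (i : Fin n) (x : Euc n) : ℝ :=
  fderiv ℝ f x (EuclideanSpace.single i 1)

/-- Second partial derivative `D²_{ij} f`. -/
def pder2 {n : ℕ} (f : Euc n → ℝ) (i j : Fin n) (x : Euc n) : ℝ :=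
  pder (fun y => pder f j y) i x

/-- Hessian tensor `D²u(x) ∈ ℝ^{Nn²}` of a vector valued map `u : ℝⁿ → ℝ^N`. -/
def Hess {n N : ℕ} (u : Euc n → Fin N → ℝ) (x : Euc n) : Fin N → Fin n → Fin n → ℝ :=
  fun α i j => pder2 (fun y => u y α) i j x

/-- The contraction `(𝐀:X)_α = Σ_{i,β,j} A_{αiβj} X_{βij}`. -/
def AC {n N : ℕ} (A : Fin N → Fin n → Fin N → Fin n → ℝ)
    (X : Fin N → Fin n → Fin n → ℝ) : Fin N → ℝ :=
  fun α => ∑ i, ∑ β, ∑ j, A α i β j * X β i j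

/-- The quadratic form `𝐀 : η⊗a⊗η⊗a = Σ A_{αiβj} η_α a_i η_β a_j`. -/
def QF {n N : ℕ} (A : Fin N → Fin n → Fin N → Fin n → ℝ)
    (η : Fin N → ℝ) (a : Fin n → ℝ) : ℝ :=
  ∑ α, ∑ i, ∑ β, ∑ j, A α i β j * η α * a i * η β * a j

/-- Symmetry `A_{αiβj} = A_{βjαi}` of a fourth order tensor (i.e. `𝐀 ∈ ℝ^{Nn×Nn}_s`). -/
def SymT {n N : ℕ} (A : Fin N → Fin n → Fin N → Fin n → ℝ) : Prop :=
  ∀ α i β j, A α i β j = A β j α i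

/-- Symmetry `X_{αij} = X_{αji}`, i.e. `X ∈ ℝ^{Nn²}_s`. -/
def SymX {n N : ℕ} (X : Fin N → Fin n → Fin n → ℝ) : Prop :=
  ∀ α i j, X α i j = X α j i

/-- `𝐀` is rank-one positive: `𝐀:η⊗a⊗η⊗a ≥ ν |η|²|a|²` for some `ν > 0`. -/
def RankOnePos {n N : ℕ} (A : Fin N → Fin n → Fin N → Fin n → ℝ) : Prop :=
  ∃ ν > (0:ℝ), ∀ (η : Fin N → ℝ) (a : Fin n → ℝ), ν * vsq η * vsq a ≤ QF A η a

/-- The ellipticity constant `ν(𝐀) = min_{|η|=|a|=1} 𝐀:η⊗a⊗η⊗a`. -/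
def nuA {n N : ℕ} (A : Fin N → Fin n → Fin N → Fin n → ℝ) : ℝ :=
  sInf {v | ∃ (η : Fin N → ℝ) (a : Fin n → ℝ), vsq η = 1 ∧ vsq a = 1 ∧ v = QF A η a}

/-- The smallest eigenvalue `λ₁(M) = min_{|a|=1} M:a⊗a` of a symmetric matrix. -/
def lam1 {m : ℕ} (M : Matrix (Fin m) (Fin m) ℝ) : ℝ :=
  sInf {v | ∃ a : Fin m → ℝ, vsq a = 1 ∧ v = ∑ i, ∑ j, M i j * a i * a j}

/-- The structural hypothesis (SH) for `𝐀` with the decomposition data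
`𝐀 = Σ_γ B^γ ⊗ A^γ` given explicitly. -/
def SHdata {n N : ℕ} (A : Fin N → Fin n → Fin N → Fin n → ℝ)
    (B : Fin N → Matrix (Fin N) (Fin N) ℝ)
    (M : Fin N → Matrix (Fin n) (Fin n) ℝ) : Prop :=
  (∀ γ, (B γ).IsSymm) ∧ (∀ γ, (M γ).IsSymm) ∧
  (∀ α i β j, A α i β j = ∑ γ, B γ α β * M γ i j) ∧
  (∀ γ δ, γ ≠ δ → ∀ y z : Fin N → ℝ, ∑ α, (B γ).mulVec y α * (B δ).mulVec z α = 0) ∧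
  (∑ γ, B γ).PosDef ∧ (∀ γ, (M γ).PosDef) ∧
  (∃ a : Fin n → ℝ, a ≠ 0 ∧ ∀ γ, (M γ).mulVec a = lam1 (M γ) • a)

/-- The structural hypothesis (SH). -/
def SH {n N : ℕ} (A : Fin N → Fin n → Fin N → Fin n → ℝ) : Prop :=
  ∃ B M, SHdata A B M

/-- `Ω` is a (bounded) domain with `C²` boundary, encoded via a `C²` defining function
with nonvanishing gradient on the boundary. -/
def IsC2Domain {n : ℕ} (Ω : Set (Euc n)) : Prop :=
  ∃ ρ : Euc n → ℝ, ContDiff ℝ 2 ρ ∧ Ω = {x | ρ x < 0} ∧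
    ∀ x ∈ frontier Ω, fderiv ℝ ρ x ≠ 0

/-- `F : Ω × ℝ^{Nn²}_s → ℝ^N` is a Carathéodory map: measurable in `x`, continuous in `X`. -/
def Caratheodory {n N : ℕ} (Ω : Set (Euc n))
    (F : Euc n → (Fin N → Fin n → Fin n → ℝ) → Fin N → ℝ) : Prop :=
  (∀ X, Measurable fun x => F x X) ∧
  (∀ᵐ x ∂(volume.restrict Ω), Continuous fun X => F x X)

/-- The K-condition (ellipticity) for `F` with data `(𝐀, α, β, γ)`. -/
def KCond {n N : ℕ} (Ω : Set (Euc n))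
    (F : Euc n → (Fin N → Fin n → Fin n → ℝ) → Fin N → ℝ)
    (A : Fin N → Fin n → Fin N → Fin n → ℝ)
    (al : Euc n → ℝ) (β γ : ℝ) : Prop :=
  SymT A ∧ RankOnePos A ∧ Measurable al ∧
  (∃ C : ℝ, ∀ᵐ x ∂(volume.restrict Ω), |al x| ≤ C) ∧
  (∀ᵐ x ∂(volume.restrict Ω), 0 < al x) ∧
  (∃ C : ℝ, ∀ᵐ x ∂(volume.restrict Ω), |1 / al x| ≤ C) ∧
  0 < β ∧ 0 < γ ∧ β + γ < 1 ∧
  (∀ᵐ x ∂(volume.restrict Ω), ∀ X Z : Fin N → Fin n → Fin n → ℝ, SymX X → SymX Z →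
    Real.sqrt (vsq fun α => AC A Z α - al x * (F x (X + Z) α - F x X α)) ≤
      β * nuA A * Real.sqrt (tsq Z) + γ * Real.sqrt (vsq (AC A Z)))

/-- Membership `u ∈ (H² ∩ H¹₀)(Ω)^N` (as a strong/classical object): twice
differentiable on `Ω`, with `u`, `Du`, `D²u` square integrable on `Ω`, and zero
boundary trace. -/
structure IsH2H10 {n N : ℕ} (Ω : Set (Euc n)) (u : Euc n → Fin N → ℝ) : Prop where
  contDiffOn : ∀ α, ContDiffOn ℝ 2 (fun x => u x α) Ω
  memL2 : IntegrableOn (fun x => vsq (u x)) Ω volume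
  grad_memL2 : IntegrableOn (fun x => ∑ α, ∑ i, (pder (fun y => u y α) i x) ^ 2) Ω volume
  hess_memL2 : IntegrableOn (fun x => tsq (Hess u x)) Ω volume
  zero_trace : ∀ x ∈ frontier Ω, Tendsto u (nhdsWithin x Ω) (nhds 0)

/-- The `L²(Ω)^N` norm of a vector valued map. -/
def L2V {n N : ℕ} (Ω : Set (Euc n)) (g : Euc n → Fin N → ℝ) : ℝ :=
  Real.sqrt (∫ x in Ω, vsq (g x))

/-- The `L²(Ω)` norm of a tensor valued map. -/
def L2T {n N : ℕ} (Ω : Set (Euc n)) (G : Euc n → Fin N → Fin n → Fin n → ℝ) : ℝ :=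
  Real.sqrt (∫ x in Ω, tsq (G x))

/-- The `H²(Ω)^N` norm `‖u‖_{L²} + ‖Du‖_{L²} + ‖D²u‖_{L²}`. -/
def H2norm {n N : ℕ} (Ω : Set (Euc n)) (u : Euc n → Fin N → ℝ) : ℝ :=
  L2V Ω u + Real.sqrt (∫ x in Ω, ∑ α, ∑ i, (pder (fun y => u y α) i x) ^ 2) +
    L2T Ω (fun x => Hess u x)

end

namespace SHaux
open Matrix

variable {m : ℕ}

def qf (Q : Matrix (Fin m) (Fin m) ℝ) (a : Fin m → ℝ) : ℝ := ∑ i, ∑ j, Q i j * a i * a j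

lemma vsq_nonneg (a : Fin m → ℝ) : 0 ≤ vsq a := Finset.sum_nonneg fun _ _ => sq_nonneg _

lemma qf_eq_dot (Q : Matrix (Fin m) (Fin m) ℝ) (a : Fin m → ℝ) :
    qf Q a = a ⬝ᵥ Q *ᵥ a := by
  unfold qf dotProduct Matrix.mulVec
  refine Finset.sum_congr rfl fun i _ => ?_
  simp only [dotProduct, Finset.mul_sum]
  exact Finset.sum_congr rfl fun j _ => by ring

lemma continuous_qf (Q : Matrix (Fin m) (Fin m) ℝ) : Continuous (qf Q) := by
  unfold qf
  exact continuous_finset_sum _ fun i _ => continuous_finset_sum _ fun j _ =>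
    (continuous_const.mul (continuous_apply i)).mul (continuous_apply j)

lemma continuous_vsq : Continuous (vsq (m := m)) := by
  unfold vsq
  exact continuous_finset_sum _ fun i _ => (continuous_apply i).pow 2

lemma sphere_compact : IsCompact {a : Fin m → ℝ | vsq a = 1} := by
  apply Metric.isCompact_of_isClosed_isBounded
  · exact isClosed_eq continuous_vsq continuous_const
  · apply (Metric.isBounded_closedBall (x := (0 : Fin m → ℝ)) (r := 1)).subset
    intro a ha
    simp only [Set.mem_setOf_eq] at ha
    simp only [Metric.mem_closedBall, dist_zero_right]
    rw [pi_norm_le_iff_of_nonneg zero_le_one]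
    intro i
    have h1 : (a i) ^ 2 ≤ vsq a := by
      exact Finset.single_le_sum (f := fun i => (a i) ^ 2) (fun _ _ => sq_nonneg _)
        (Finset.mem_univ i)
    rw [ha] at h1
    simpa using (sq_le_one_iff_abs_le_one (a i)).1 h1

lemma lam1_eq_sInf_image (Q : Matrix (Fin m) (Fin m) ℝ) :
    lam1 Q = sInf (qf Q '' {a | vsq a = 1}) := by
  unfold lam1
  congr 1
  ext v
  constructor
  · rintro ⟨a, ha, rfl⟩; exact ⟨a, ha, rfl⟩
  · rintro ⟨a, ha, rfl⟩; exact ⟨a, ha, rfl⟩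

lemma sphere_nonempty (hm : 0 < m) : ({a : Fin m → ℝ | vsq a = 1}).Nonempty := by
  refine ⟨Pi.single ⟨0, hm⟩ 1, ?_⟩
  simp only [Set.mem_setOf_eq, vsq]
  rw [Finset.sum_eq_single ⟨0, hm⟩]
  · simp
  · intro b _ hb; simp [Pi.single_apply, hb]
  · simp

lemma lam1_le (hm : 0 < m) (Q : Matrix (Fin m) (Fin m) ℝ) {a : Fin m → ℝ} (ha : vsq a = 1) :
    lam1 Q ≤ qf Q a := by
  rw [lam1_eq_sInf_image]
  exact csInf_le ((sphere_compact.image (continuous_qf Q)).bddBelow)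
    ⟨a, ha, rfl⟩

lemma lam1_mem (hm : 0 < m) (Q : Matrix (Fin m) (Fin m) ℝ) :
    ∃ a, vsq a = 1 ∧ lam1 Q = qf Q a := by
  have := (sphere_compact.image (continuous_qf Q)).sInf_mem
    ((sphere_nonempty hm).image _)
  rw [lam1_eq_sInf_image]
  obtain ⟨a, ha, h⟩ := this
  exact ⟨a, ha, h.symm⟩

lemma lam1_pos (hm : 0 < m) {Q : Matrix (Fin m) (Fin m) ℝ} (hQ : Q.PosDef) :
    0 < lam1 Q := by
  obtain ⟨a, ha, h⟩ := lam1_mem hm Q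
  rw [h, qf_eq_dot]
  have hane : a ≠ 0 := by
    intro h0
    rw [h0] at ha
    simp [vsq] at ha
  have := hQ.dotProduct_mulVec_pos hane
  simpa using this

lemma vsq_smul (c : ℝ) (a : Fin m → ℝ) : vsq (c • a) = c ^ 2 * vsq a := by
  unfold vsq
  rw [Finset.mul_sum]
  exact Finset.sum_congr rfl fun i _ => by simp [mul_pow]

lemma qf_smul (Q : Matrix (Fin m) (Fin m) ℝ) (c : ℝ) (a : Fin m → ℝ) :
    qf Q (c • a) = c ^ 2 * qf Q a := by
  unfold qf
  simp only [Finset.mul_sum]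
  exact Finset.sum_congr rfl fun i _ => Finset.sum_congr rfl fun j _ => by
    simp [Pi.smul_apply, smul_eq_mul]; ring

lemma lam1_mul_vsq_le (hm : 0 < m) (Q : Matrix (Fin m) (Fin m) ℝ) (a : Fin m → ℝ) :
    lam1 Q * vsq a ≤ qf Q a := by
  rcases eq_or_ne a 0 with rfl | hne
  · simp [vsq, qf]
  · have hv : 0 < vsq a := by
      obtain ⟨i, hi⟩ := Function.ne_iff.1 hne
      have : (0:ℝ) < (a i) ^ 2 := lt_of_le_of_ne (sq_nonneg _) (Ne.symm (pow_ne_zero 2 hi))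
      exact lt_of_lt_of_le this (Finset.single_le_sum (f := fun i => (a i) ^ 2)
        (fun _ _ => sq_nonneg _) (Finset.mem_univ i))
    set c := Real.sqrt (vsq a) with hc
    have hcpos : 0 < c := Real.sqrt_pos.2 hv
    have hc2 : c ^ 2 = vsq a := Real.sq_sqrt hv.le
    have hsa : vsq (c⁻¹ • a) = 1 := by
      rw [vsq_smul, inv_pow, hc2]
      field_simp
    have := lam1_le hm Q hsa
    rw [qf_smul] at this
    have h2 : lam1 Q * vsq a ≤ (c⁻¹ ^ 2 * qf Q a) * vsq a := by
      nlinarith [hv]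
    calc lam1 Q * vsq a ≤ (c⁻¹ ^ 2 * qf Q a) * vsq a := h2
      _ = qf Q a := by rw [inv_pow, hc2]; field_simp


lemma sum_pull5 {N n : ℕ} (c : Fin N → Fin N → Fin n → Fin N → Fin n → ℝ) :
    ∑ α, ∑ i, ∑ β, ∑ j, ∑ γ, c γ α i β j = ∑ γ, ∑ α, ∑ i, ∑ β, ∑ j, c γ α i β j := by
  have e1 : ∀ (α : Fin N) (i : Fin n) (β : Fin N),
      ∑ j, ∑ γ, c γ α i β j = ∑ γ, ∑ j, c γ α i β j := fun _ _ _ => Finset.sum_comm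
  have e2 : ∀ (α : Fin N) (i : Fin n),
      ∑ β, ∑ γ, ∑ j, c γ α i β j = ∑ γ, ∑ β, ∑ j, c γ α i β j := fun _ _ => Finset.sum_comm
  have e3 : ∀ (α : Fin N),
      ∑ i, ∑ γ, ∑ β, ∑ j, c γ α i β j = ∑ γ, ∑ i, ∑ β, ∑ j, c γ α i β j :=
    fun _ => Finset.sum_comm
  simp only [e1, e2, e3]
  exact Finset.sum_comm

theorem SH_main
    {n N : ℕ} (hN : 0 < N)
    (A : Fin N → Fin n → Fin N → Fin n → ℝ)
    (B : Fin N → Matrix (Fin N) (Fin N) ℝ)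
    (M : Fin N → Matrix (Fin n) (Fin n) ℝ)
    (hSH : SHdata A B M) :
    0 < lam1 (∑ γ, B γ) *
        (Finset.univ.inf' ⟨⟨0, hN⟩, Finset.mem_univ _⟩ fun γ => lam1 (M γ)) ∧
    ∀ (η : Fin N → ℝ) (a : Fin n → ℝ),
      lam1 (∑ γ, B γ) *
          (Finset.univ.inf' ⟨⟨0, hN⟩, Finset.mem_univ _⟩ fun γ => lam1 (M γ)) *
          vsq η * vsq a ≤ QF A η a := by
  classical
  obtain ⟨hBsymm, hMsymm, hA, horth, hPpd, hMpd, a0, ha0, -⟩ := hSH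
  have hn : 0 < n := by
    rcases Nat.eq_zero_or_pos n with h | h
    · subst h; exact absurd (Subsingleton.elim a0 0) ha0
    · exact h
  set P : Matrix (Fin N) (Fin N) ℝ := ∑ γ, B γ with hP
  set lb : ℝ := lam1 P with hlb
  set lm : ℝ := Finset.univ.inf' ⟨⟨0, hN⟩, Finset.mem_univ _⟩ fun γ => lam1 (M γ) with hlm
  have hlbpos : 0 < lb := lam1_pos hN hPpd
  have hlmpos : 0 < lm := by
    rw [hlm]
    exact (Finset.lt_inf'_iff _).2 fun γ _ => lam1_pos hn (hMpd γ)
  -- matrix product relations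
  have hBB : ∀ γ δ, γ ≠ δ → B γ * B δ = 0 := by
    intro γ δ hγδ
    ext i j
    have h := horth γ δ hγδ (Pi.single i 1) (Pi.single j 1)
    simp only [Matrix.mulVec_single_one, Matrix.col_apply] at h
    have h2 : ∑ α, B γ α i * B δ α j = (B γ * B δ) i j := by
      rw [Matrix.mul_apply]
      exact Finset.sum_congr rfl fun α _ => by rw [(hBsymm γ).apply α i]
    rw [h2] at h
    simpa using h
  have hu : IsUnit P.det := hPpd.det_pos.ne'.isUnit
  have hPC : ∀ γ, P * B γ = B γ * B γ := by
    intro γ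
    rw [hP, Finset.sum_mul]
    exact Finset.sum_eq_single_of_mem γ (Finset.mem_univ γ) fun δ _ hδ => hBB δ γ hδ
  have hCP : ∀ γ, B γ * P = B γ * B γ := by
    intro γ
    rw [hP, Finset.mul_sum]
    exact Finset.sum_eq_single_of_mem γ (Finset.mem_univ γ) fun δ _ hδ => hBB γ δ (Ne.symm hδ)
  have hcomm : ∀ γ, B γ * P⁻¹ = P⁻¹ * B γ := by
    intro γ
    calc B γ * P⁻¹ = (P⁻¹ * P) * (B γ * P⁻¹) := by
          rw [Matrix.nonsing_inv_mul _ hu, Matrix.one_mul]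
      _ = P⁻¹ * ((P * B γ) * P⁻¹) := by simp only [Matrix.mul_assoc]
      _ = P⁻¹ * ((B γ * P) * P⁻¹) := by rw [hPC γ, hCP γ]
      _ = P⁻¹ * B γ * (P * P⁻¹) := by simp only [Matrix.mul_assoc]
      _ = P⁻¹ * B γ := by rw [Matrix.mul_nonsing_inv _ hu, Matrix.mul_one]
  have hCPC : ∀ γ, B γ * P⁻¹ * B γ = B γ := by
    intro γ
    rw [hcomm γ, Matrix.mul_assoc, ← hPC γ, ← Matrix.mul_assoc,
      Matrix.nonsing_inv_mul _ hu, Matrix.one_mul]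
  -- nonnegativity of the B-quadratic forms
  have hbq_nonneg : ∀ γ (η : Fin N → ℝ), 0 ≤ qf (B γ) η := by
    intro γ η
    rw [qf_eq_dot]
    have h1 : B γ *ᵥ η = (B γ * P⁻¹ * B γ) *ᵥ η := by rw [hCPC γ]
    rw [h1]
    have h2 : (B γ * P⁻¹ * B γ) *ᵥ η = B γ *ᵥ (P⁻¹ *ᵥ (B γ *ᵥ η)) := by
      rw [← Matrix.mulVec_mulVec, ← Matrix.mulVec_mulVec]
    rw [h2, Matrix.dotProduct_mulVec]
    have h3 : η ᵥ* B γ = B γ *ᵥ η := by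
      conv_lhs => rw [← hBsymm γ]
      rw [Matrix.vecMul_transpose]
    rw [h3]
    have h4 := (hPpd.inv).posSemidef.dotProduct_mulVec_nonneg (B γ *ᵥ η)
    simpa using h4
  -- key algebraic identity
  have key : ∀ (η : Fin N → ℝ) (a : Fin n → ℝ),
      QF A η a = ∑ γ, qf (B γ) η * qf (M γ) a := by
    intro η a
    unfold QF qf
    have step1 : ∀ (α : Fin N) (i : Fin n) (β : Fin N) (j : Fin n),
        A α i β j * η α * a i * η β * a j
          = ∑ γ, B γ α β * η α * η β * (M γ i j * a i * a j) := by
      intro α i β j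
      rw [hA, Finset.sum_mul, Finset.sum_mul, Finset.sum_mul, Finset.sum_mul]
      exact Finset.sum_congr rfl fun γ _ => by ring
    simp only [step1]
    rw [sum_pull5 (fun γ α i β j => B γ α β * η α * η β * (M γ i j * a i * a j))]
    refine Finset.sum_congr rfl fun γ _ => ?_
    rw [Finset.sum_mul_sum]
    refine Finset.sum_congr rfl fun α _ => ?_
    refine Finset.sum_congr rfl fun i _ => ?_
    rw [Finset.sum_mul_sum]
  refine ⟨mul_pos hlbpos hlmpos, fun η a => ?_⟩
  rw [key η a]
  have hstep : ∀ γ : Fin N, qf (B γ) η * (lm * vsq a) ≤ qf (B γ) η * qf (M γ) a := by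
    intro γ
    refine mul_le_mul_of_nonneg_left ?_ (hbq_nonneg γ η)
    calc lm * vsq a ≤ lam1 (M γ) * vsq a := by
          refine mul_le_mul_of_nonneg_right ?_ (vsq_nonneg a)
          exact Finset.inf'_le _ (Finset.mem_univ γ)
      _ ≤ qf (M γ) a := lam1_mul_vsq_le hn (M γ) a
  have hsum : ∑ γ, qf (B γ) η * (lm * vsq a) ≤ ∑ γ, qf (B γ) η * qf (M γ) a :=
    Finset.sum_le_sum fun γ _ => hstep γ
  have hsumbq : ∑ γ, qf (B γ) η = qf P η := by
    unfold qf
    have hentry : ∀ (α β : Fin N), P α β = ∑ γ, B γ α β := by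
      intro α β
      rw [hP]
      simp [Matrix.sum_apply]
    simp only [hentry, Finset.sum_mul]
    exact Finset.sum_comm.trans (Finset.sum_congr rfl fun α _ => Finset.sum_comm)
  have hfinal : lb * lm * vsq η * vsq a ≤ ∑ γ, qf (B γ) η * (lm * vsq a) := by
    have h1 : ∑ γ, qf (B γ) η * (lm * vsq a) = qf P η * (lm * vsq a) := by
      rw [← Finset.sum_mul, hsumbq]
    rw [h1]
    have h2 : lb * vsq η ≤ qf P η := lam1_mul_vsq_le hN P η
    have h3 : 0 ≤ lm * vsq a := mul_nonneg hlmpos.le (vsq_nonneg a)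
    calc lb * lm * vsq η * vsq a = (lb * vsq η) * (lm * vsq a) := by ring
      _ ≤ qf P η * (lm * vsq a) := mul_le_mul_of_nonneg_right h2 h3
  exact le_trans hfinal hsum

end SHaux


/-- Every tensor `𝐀 = Σ_γ B^γ ⊗ A^γ` satisfying the structural
hypothesis (SH) is rank-one positive; more precisely
`𝐀:η⊗a⊗η⊗a ≥ (λ₁(B¹+⋯+B^N) · min_γ λ₁(A^γ)) |η|²|a|²`, and the constant is
strictly positive. -/
theorem SH_implies_rankOnePositive
    {n N : ℕ} (hN : 0 < N)
    (A : Fin N → Fin n → Fin N → Fin n → ℝ)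
    (B : Fin N → Matrix (Fin N) (Fin N) ℝ)
    (M : Fin N → Matrix (Fin n) (Fin n) ℝ)
    (hSH : SHdata A B M) :
    0 < lam1 (∑ γ, B γ) *
        (Finset.univ.inf' ⟨⟨0, hN⟩, Finset.mem_univ _⟩ fun γ => lam1 (M γ)) ∧
    ∀ (η : Fin N → ℝ) (a : Fin n → ℝ),
      lam1 (∑ γ, B γ) *
          (Finset.univ.inf' ⟨⟨0, hN⟩, Finset.mem_univ _⟩ fun γ => lam1 (M γ)) *
          vsq η * vsq a ≤ QF A η a :=
  SHaux.SH_main hN A B M hSH
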